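/- arXiv:2110.11457 — 2 statements merged into one kernel-verified Lean document; each statement's English description precedes it below -/
import Mathlib

section
/- The functions h(t,x,y) = 1 - (a²/(4bg))·exp(-2b(x̄² + ȳ²)), u(t,x,y) = M·cos θ + a·ȳ·exp(-b(x̄² + ȳ²)), v(t,x,y) = M·sin θ - a·x̄·exp(-b(x̄² + ȳ²)), where x̄ = x - x₀ - Mt·cos θ and ȳ = y - y₀ - Mt·sin θ, satisfy the mass conservation equation of the two-dimensional shallow water system: ∂ₜh + ∂ₓ(hu) + ∂_y(hv) = 0, for all real constants M, a, b, g, x₀, y₀, θ with g > 0 and b ≠ 0. -/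
noncomputable def xbar (M θ x₀ : ℝ) (t x : ℝ) : ℝ := x - x₀ - M * t * Real.cos θ
noncomputable def ybar (M θ y₀ : ℝ) (t y : ℝ) : ℝ := y - y₀ - M * t * Real.sin θ

noncomputable def hv (M a b g θ x₀ y₀ : ℝ) (t x y : ℝ) : ℝ :=
  1 - a ^ 2 / (4 * b * g) * Real.exp (-2 * b * ((xbar M θ x₀ t x) ^ 2 + (ybar M θ y₀ t y) ^ 2))

noncomputable def uv (M a b θ x₀ y₀ : ℝ) (t x y : ℝ) : ℝ :=
  M * Real.cos θ + a * ybar M θ y₀ t y * Real.exp (-b * ((xbar M θ x₀ t x) ^ 2 + (ybar M θ y₀ t y) ^ 2))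

noncomputable def vv (M a b θ x₀ y₀ : ℝ) (t x y : ℝ) : ℝ :=
  M * Real.sin θ - a * xbar M θ x₀ t x * Real.exp (-b * ((xbar M θ x₀ t x) ^ 2 + (ybar M θ y₀ t y) ^ 2))

private lemma hasDerivAt_expq {f g : ℝ → ℝ} {f' g' : ℝ} (c : ℝ) {t : ℝ}
    (hf : HasDerivAt f f' t) (hg : HasDerivAt g g' t) :
    HasDerivAt (fun s => Real.exp (c * (f s ^ 2 + g s ^ 2)))
      (Real.exp (c * (f t ^ 2 + g t ^ 2)) * (c * (2 * f t * f' + 2 * g t * g'))) t := by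
  have h1 := (((hf.fun_pow 2).fun_add (hg.fun_pow 2)).const_mul c).exp
  convert! h1 using 1
  ring

private lemma hasDerivAt_h (K b : ℝ) {f g : ℝ → ℝ} {f' g' : ℝ} {t : ℝ}
    (hf : HasDerivAt f f' t) (hg : HasDerivAt g g' t) :
    HasDerivAt (fun s => 1 - K * Real.exp (-2 * b * (f s ^ 2 + g s ^ 2)))
      (-(K * (Real.exp (-2 * b * (f t ^ 2 + g t ^ 2)) *
        (-2 * b * (2 * f t * f' + 2 * g t * g'))))) t :=
  (((hasDerivAt_expq (-2 * b) hf hg).const_mul K).const_sub 1)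

private lemma hasDerivAt_u (A a b : ℝ) {f g : ℝ → ℝ} {f' g' : ℝ} {t : ℝ}
    (hf : HasDerivAt f f' t) (hg : HasDerivAt g g' t) :
    HasDerivAt (fun s => A + a * g s * Real.exp (-b * (f s ^ 2 + g s ^ 2)))
      (a * g' * Real.exp (-b * (f t ^ 2 + g t ^ 2)) +
        a * g t * (Real.exp (-b * (f t ^ 2 + g t ^ 2)) *
          (-b * (2 * f t * f' + 2 * g t * g')))) t :=
  (((hg.const_mul a).mul (hasDerivAt_expq (-b) hf hg)).const_add A)

private lemma hasDerivAt_v (B a b : ℝ) {f g : ℝ → ℝ} {f' g' : ℝ} {t : ℝ}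
    (hf : HasDerivAt f f' t) (hg : HasDerivAt g g' t) :
    HasDerivAt (fun s => B - a * f s * Real.exp (-b * (f s ^ 2 + g s ^ 2)))
      (-(a * f' * Real.exp (-b * (f t ^ 2 + g t ^ 2)) +
        a * f t * (Real.exp (-b * (f t ^ 2 + g t ^ 2)) *
          (-b * (2 * f t * f' + 2 * g t * g'))))) t :=
  (((hf.const_mul a).mul (hasDerivAt_expq (-b) hf hg)).const_sub B)

/-- Mass conservation for the traveling-vortex solution of the 2D shallow water system. -/
theorem vortex_mass_conservation (M a b g x₀ y₀ θ : ℝ) (hg : 0 < g) (hb : b ≠ 0) :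
    ∀ t x y : ℝ,
      deriv (fun t' => hv M a b g θ x₀ y₀ t' x y) t
        + deriv (fun x' => hv M a b g θ x₀ y₀ t x' y * uv M a b θ x₀ y₀ t x' y) x
        + deriv (fun y' => hv M a b g θ x₀ y₀ t x y' * vv M a b θ x₀ y₀ t x y') y = 0 := by
  intro t x y
  simp only [hv, uv, vv, xbar, ybar]
  set c := Real.cos θ with hc
  set s := Real.sin θ with hs
  set K : ℝ := a ^ 2 / (4 * b * g) with hK
  -- building blocks
  have hXt : HasDerivAt (fun t' : ℝ => x - x₀ - M * t' * c) (-(M * c)) t := by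
    have := ((((hasDerivAt_id t).const_mul M).mul_const c).const_sub (x - x₀))
    convert! this using 1
    ring
  have hYt : HasDerivAt (fun t' : ℝ => y - y₀ - M * t' * s) (-(M * s)) t := by
    have := ((((hasDerivAt_id t).const_mul M).mul_const s).const_sub (y - y₀))
    convert! this using 1
    ring
  have hXx : HasDerivAt (fun x' : ℝ => x' - x₀ - M * t * c) 1 x := by
    simpa using ((hasDerivAt_id x).sub_const x₀).sub_const (M * t * c)
  have hYy : HasDerivAt (fun y' : ℝ => y' - y₀ - M * t * s) 1 y := by
    simpa using ((hasDerivAt_id y).sub_const y₀).sub_const (M * t * s)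
  set X : ℝ := x - x₀ - M * t * c with hX
  set Y : ℝ := y - y₀ - M * t * s with hY
  -- the three derivatives
  have D1 := (hasDerivAt_h K b hXt hYt).deriv
  have D2 := ((hasDerivAt_h K b hXx (hasDerivAt_const x Y)).fun_mul
    (hasDerivAt_u (M * c) a b hXx (hasDerivAt_const x Y))).deriv
  have D3 := ((hasDerivAt_h K b (hasDerivAt_const y X) hYy).fun_mul
    (hasDerivAt_v (M * s) a b (hasDerivAt_const y X) hYy)).deriv
  rw [D1, D2, D3]
  simp only [← hX, ← hY]
  have hE : Real.exp (-2 * b * (X ^ 2 + Y ^ 2)) = Real.exp (-b * (X ^ 2 + Y ^ 2)) ^ 2 := by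
    rw [show (-2 * b * (X ^ 2 + Y ^ 2)) = (-b * (X ^ 2 + Y ^ 2)) + (-b * (X ^ 2 + Y ^ 2)) by ring,
      Real.exp_add]
    ring
  rw [hE, hK]
  have hg' : g ≠ 0 := ne_of_gt hg
  field_simp
  ring
end

section
/- With the same functions h, u, v as in the traveling-vortex solution (h = 1 - (a²/(4bg))exp(-2b(x̄²+ȳ²)), u = M cos θ + aȳ e^{-b(x̄²+ȳ²)}, v = M sin θ - ax̄ e^{-b(x̄²+ȳ²)}, x̄ = x - x₀ - Mt cos θ, ȳ = y - y₀ - Mt sin θ), the x-momentum equation ∂ₜ(hu) + ∂ₓ(hu² + gh²/2) + ∂_y(huv) = 0 holds identically for all (t,x,y). -/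
lemma expD {X Y : ℝ → ℝ} {dX dY p : ℝ} (c : ℝ)
    (hX : HasDerivAt X dX p) (hY : HasDerivAt Y dY p) :
    HasDerivAt (fun q => Real.exp (c * (X q ^ 2 + Y q ^ 2)))
      (Real.exp (c * (X p ^ 2 + Y p ^ 2)) * (c * (2 * X p * dX + 2 * Y p * dY))) p := by
  have h0 : HasDerivAt (fun q => c * (X q ^ 2 + Y q ^ 2))
      (c * (2 * X p * dX + 2 * Y p * dY)) p := by
    have := ((hX.pow 2).add (hY.pow 2)).const_mul c
    exact this.congr_deriv (by norm_num)
  exact h0.exp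

lemma hvD {X Y : ℝ → ℝ} {dX dY p : ℝ} (a b g : ℝ)
    (hX : HasDerivAt X dX p) (hY : HasDerivAt Y dY p) :
    HasDerivAt (fun q => 1 - a ^ 2 / (4 * b * g) * Real.exp (-2 * b * (X q ^ 2 + Y q ^ 2)))
      (-(a ^ 2 / (4 * b * g) *
        (Real.exp (-2 * b * (X p ^ 2 + Y p ^ 2)) * (-2 * b * (2 * X p * dX + 2 * Y p * dY))))) p :=
  ((expD (-2 * b) hX hY).const_mul (a ^ 2 / (4 * b * g))).const_sub 1

lemma uvD {X Y : ℝ → ℝ} {dX dY p : ℝ} (M a b θ : ℝ)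
    (hX : HasDerivAt X dX p) (hY : HasDerivAt Y dY p) :
    HasDerivAt (fun q => M * Real.cos θ + a * Y q * Real.exp (-b * (X q ^ 2 + Y q ^ 2)))
      (a * dY * Real.exp (-b * (X p ^ 2 + Y p ^ 2)) +
        a * Y p * (Real.exp (-b * (X p ^ 2 + Y p ^ 2)) * (-b * (2 * X p * dX + 2 * Y p * dY)))) p :=
  ((hY.const_mul a).mul (expD (-b) hX hY)).const_add (M * Real.cos θ)

lemma vvD {X Y : ℝ → ℝ} {dX dY p : ℝ} (M a b θ : ℝ)
    (hX : HasDerivAt X dX p) (hY : HasDerivAt Y dY p) :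
    HasDerivAt (fun q => M * Real.sin θ - a * X q * Real.exp (-b * (X q ^ 2 + Y q ^ 2)))
      (-(a * dX * Real.exp (-b * (X p ^ 2 + Y p ^ 2)) +
        a * X p * (Real.exp (-b * (X p ^ 2 + Y p ^ 2)) * (-b * (2 * X p * dX + 2 * Y p * dY))))) p :=
  (((hX.const_mul a).mul (expD (-b) hX hY)).const_sub (M * Real.sin θ))

/-- x-momentum equation for the traveling-vortex solution of the 2D shallow water system. -/
theorem vortex_x_momentum (M a b g x₀ y₀ θ : ℝ) (hg : 0 < g) (hb : b ≠ 0) :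
    ∀ t x y : ℝ,
      deriv (fun t' => hv M a b g θ x₀ y₀ t' x y * uv M a b θ x₀ y₀ t' x y) t
        + deriv (fun x' => hv M a b g θ x₀ y₀ t x' y * (uv M a b θ x₀ y₀ t x' y) ^ 2
            + g * (hv M a b g θ x₀ y₀ t x' y) ^ 2 / 2) x
        + deriv (fun y' => hv M a b g θ x₀ y₀ t x y' * uv M a b θ x₀ y₀ t x y'
            * vv M a b θ x₀ y₀ t x y') y = 0 := by
  intro t x y
  -- derivatives of xbar/ybar in each direction
  have hXt : HasDerivAt (fun t' : ℝ => xbar M θ x₀ t' x) (-(M * Real.cos θ)) t := by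
    unfold xbar
    have h := (((hasDerivAt_id t).const_mul M).mul_const (Real.cos θ)).const_sub (x - x₀)
    exact h.congr_deriv (by ring)
  have hYt : HasDerivAt (fun t' : ℝ => ybar M θ y₀ t' y) (-(M * Real.sin θ)) t := by
    unfold ybar
    have h := (((hasDerivAt_id t).const_mul M).mul_const (Real.sin θ)).const_sub (y - y₀)
    exact h.congr_deriv (by ring)
  have hXx : HasDerivAt (fun x' : ℝ => xbar M θ x₀ t x') 1 x := by
    unfold xbar
    simpa using ((hasDerivAt_id x).sub_const x₀).sub_const (M * t * Real.cos θ)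
  have hYx : HasDerivAt (fun _ : ℝ => ybar M θ y₀ t y) (0 : ℝ) x := hasDerivAt_const x _
  have hXy : HasDerivAt (fun _ : ℝ => xbar M θ x₀ t x) (0 : ℝ) y := hasDerivAt_const y _
  have hYy : HasDerivAt (fun y' : ℝ => ybar M θ y₀ t y') 1 y := by
    unfold ybar
    simpa using ((hasDerivAt_id y).sub_const y₀).sub_const (M * t * Real.sin θ)
  have H1 := (hvD a b g hXt hYt).mul (uvD M a b θ hXt hYt)
  have H2 := ((hvD a b g hXx hYx).mul ((uvD M a b θ hXx hYx).pow 2)).add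
    (((hvD a b g hXx hYx).pow 2).const_mul g |>.div_const 2)
  have H3 := ((hvD a b g hXy hYy).mul (uvD M a b θ hXy hYy)).mul (vvD M a b θ hXy hYy)
  simp only [Pi.mul_def, Pi.add_def, Pi.pow_def] at H1 H2 H3
  unfold hv uv vv
  rw [H1.deriv, H2.deriv, H3.deriv]
  set A := xbar M θ x₀ t x with hA
  set B := ybar M θ y₀ t y with hB
  set E := Real.exp (-b * (A ^ 2 + B ^ 2)) with hE
  have hE2 : Real.exp (-2 * b * (A ^ 2 + B ^ 2)) = E ^ 2 := by
    rw [hE, ← Real.exp_nat_mul]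
    norm_num
    ring_nf
  rw [hE2]
  have hg' : g ≠ 0 := ne_of_gt hg
  field_simp
  ring_nf
  field_simp
  ring
end
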